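/- Let q = 2^n and F = GF(q^4). Then (1 + μ_{(q-1)(q^2+1)}) ∩ μ_{(q-1)(q^2+1)} = GF(q) \ GF(2), where μ_m denotes the m-th roots of unity in F. That is, y and 1+y are both (q-1)(q^2+1)-st roots of unity in F if and only if y ∈ GF(q) and y ∉ {0,1}. -/
import Mathlib

lemma char_two_of_card (n : ℕ) (hn : 0 < n) (F : Type) [Field F] [Fintype F]
    (hF : Fintype.card F = (2^n)^4) : CharP F 2 := by
  obtain ⟨m, hp, hcard⟩ := FiniteField.card F (ringChar F)
  have hpow : (ringChar F) ^ (m : ℕ) = 2 ^ (n * 4) := by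
    rw [← hcard, hF, ← pow_mul]
  have hdvd : ringChar F ∣ 2 ^ (n * 4) := hpow ▸ dvd_pow_self _ m.pos.ne'
  have h2 : ringChar F = 2 :=
    (Nat.prime_dvd_prime_iff_eq hp Nat.prime_two).mp (hp.dvd_of_dvd_pow hdvd)
  exact h2 ▸ ringChar.charP F

lemma frob_linear (F : Type) [Field F] [CharP F 2] (n : ℕ) (A B y : F)
    (hA : A ^ (2^n) = A) (hB : B ^ (2^n) = B) (hq : y ^ 2 = A * y + B) :
    ∀ k : ℕ, ∃ d : F, d ^ (2^n) = d ∧ y ^ (2^k) = A ^ (2^k - 1) * y + d := by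
  have h2z : (2 : F) = 0 := CharTwo.two_eq_zero
  intro k
  induction k with
  | zero => exact ⟨0, by simp, by simp⟩
  | succ k ih =>
    obtain ⟨d, hd, hyk⟩ := ih
    refine ⟨A ^ (2^(k+1) - 2) * B + d ^ 2, ?_, ?_⟩
    · have e1 : (A ^ (2^(k+1)-2)) ^ (2^n) = A ^ (2^(k+1)-2) := by
        rw [← pow_mul, mul_comm, pow_mul, hA]
      have e2 : (d ^ 2) ^ (2^n) = d ^ 2 := by
        rw [← pow_mul, mul_comm, pow_mul, hd]
      rw [add_pow_char_pow, mul_pow, e1, hB, e2]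
    · have h1 : y ^ (2^(k+1)) = (y ^ (2^k)) ^ 2 := by rw [← pow_mul, pow_succ]
      have hk1 : 1 ≤ 2^k := Nat.one_le_two_pow
      have e2 : 2^(k+1) - 2 = 2*(2^k - 1) := by rw [pow_succ]; omega
      have e3 : 2^(k+1) - 1 = 2*(2^k - 1) + 1 := by rw [pow_succ]; omega
      rw [h1, hyk, e2, e3]
      linear_combination (A^(2*(2^k-1))) * hq + (A^(2^k-1)*y*d) * h2z

theorem roots_of_unity_intersection (n : ℕ) (hn : 0 < n) (F : Type) [Field F] [Fintype F]
    (hF : Fintype.card F = (2^n)^4) (y : F) :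
    (y ^ ((2^n - 1) * ((2^n)^2 + 1)) = 1 ∧ (1 + y) ^ ((2^n - 1) * ((2^n)^2 + 1)) = 1) ↔
      (y ^ (2^n) = y ∧ y ≠ 0 ∧ y ≠ 1) := by
  haveI : CharP F 2 := char_two_of_card n hn F hF
  set q := 2^n with hqdef
  have hq2 : 2 ≤ q := by
    calc 2 = 2^1 := (pow_one 2).symm
    _ ≤ 2^n := Nat.pow_le_pow_right (by norm_num) hn
  have hm0 : (q - 1) * (q^2 + 1) ≠ 0 := Nat.mul_ne_zero (by omega) (by positivity)
  have h2z : (2 : F) = 0 := CharTwo.two_eq_zero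
  have frob : ∀ (x z : F) (k : ℕ), (x + z) ^ (q^k) = x ^ (q^k) + z ^ (q^k) := by
    intro x z k
    have e : q ^ k = 2 ^ (n * k) := by rw [hqdef, ← pow_mul]
    rw [e, add_pow_char_pow]
  have frob1 : ∀ x z : F, (x + z) ^ q = x ^ q + z ^ q := by
    intro x z
    have := frob x z 1
    simpa using this
  constructor
  · rintro ⟨h1, h2⟩
    have hy0 : y ≠ 0 := by
      rintro rfl; rw [zero_pow hm0] at h1; exact zero_ne_one h1
    have hy1 : y ≠ 1 := by
      rintro rfl
      have h11 : (1 : F) + 1 = 0 := by rw [← h2z]; norm_num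
      rw [h11, zero_pow hm0] at h2; exact zero_ne_one h2
    have expid : ∀ x : F, x ^ ((q-1)*(q^2+1)) = 1 → x ^ (q^3) * x ^ q = x ^ (q^2) * x := by
      intro x hx
      have h1' : 1 + (q - 1) = q := by omega
      have e : q^3 + q = (q^2 + 1) + (q-1)*(q^2+1) := by
        calc q^3 + q = q * (q^2+1) := by ring
        _ = (1 + (q-1)) * (q^2+1) := by rw [h1']
        _ = (q^2 + 1) + (q-1)*(q^2+1) := by ring
      calc x ^ (q^3) * x ^ q = x ^ (q^3 + q) := (pow_add x _ _).symm
      _ = x ^ (q^2+1) * x ^ ((q-1)*(q^2+1)) := by rw [e, pow_add]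
      _ = x ^ (q^2) * x * 1 := by rw [hx, pow_add, pow_one]
      _ = x ^ (q^2) * x := by rw [mul_one]
    have h1' := expid y h1
    have h2' := expid (1 + y) h2
    have hfe : ∀ k : ℕ, (1 + y) ^ (q^k) = 1 + y ^ (q^k) := by
      intro k; rw [frob 1 y k, one_pow]
    have hfe1 : (1 + y) ^ q = 1 + y ^ q := by rw [frob1 1 y, one_pow]
    rw [hfe 3, hfe 2, hfe1] at h2'
    have hsum : y ^ q + y ^ (q^3) = y + y ^ (q^2) := by
      linear_combination h2' - h1'
    set A := y + y ^ (q^2) with hAdef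
    set B := y * y ^ (q^2) with hBdef
    have hpow23 : (y ^ (q^2)) ^ q = y ^ (q^3) := by
      rw [← pow_mul]; ring_nf
    have hA : A ^ q = A := by
      have e : A ^ q = y ^ q + y ^ (q^3) := by rw [hAdef, frob1, hpow23]
      rw [e, hsum]
    have hB : B ^ q = B := by
      have e : B ^ q = y ^ q * y ^ (q^3) := by rw [hBdef, mul_pow, hpow23]
      rw [e, mul_comm, h1', mul_comm]
    have hquad : y ^ 2 = A * y + B := by
      rw [hAdef, hBdef]; linear_combination (-(y * y ^ (q^2))) * h2z
    obtain ⟨d, hd, hyq⟩ := frob_linear F n A B y (hqdef ▸ hA) (hqdef ▸ hB) hquad n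
    rw [← hqdef] at hyq hd
    refine ⟨?_, hy0, hy1⟩
    by_cases hA0 : A = 0
    · have hq1 : A ^ (q - 1) = 0 := by
        rw [hA0]; exact zero_pow (by omega)
      rw [hq1, zero_mul, zero_add] at hyq
      have hy2 : y ^ (q^2) = d := by
        have e : y ^ (q^2) = (y ^ q) ^ q := by rw [pow_two, pow_mul]
        rw [e, hyq, hd]
      have hyy : y = y ^ (q^2) := by
        have h0 : y + y ^ (q^2) = 0 := hA0
        linear_combination h0 - (y ^ (q^2)) * h2z
      rw [hyq, ← hy2, ← hyy]
    · exfalso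
      have hAq1 : A ^ (q - 1) = 1 := by
        have h' : A ^ (q-1) * A = 1 * A := by
          rw [one_mul, ← pow_succ, show q-1+1=q by omega, hA]
        exact mul_right_cancel₀ hA0 h'
      rw [hAq1, one_mul] at hyq
      have hy2 : y ^ (q^2) = y := by
        have e : y ^ (q^2) = (y ^ q) ^ q := by rw [pow_two, pow_mul]
        rw [e, hyq, frob1, hyq, hd]
        linear_combination d * h2z
      apply hA0
      rw [hAdef, hy2]
      exact CharTwo.add_self_eq_zero y
  · rintro ⟨hyq, hy0, hy1⟩
    have hs0 : (1 : F) + y ≠ 0 := by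
      intro h
      apply hy1
      linear_combination h - h2z
    have key : ∀ x : F, x ≠ 0 → x ^ q = x → x ^ ((q-1)*(q^2+1)) = 1 := by
      intro x hx0 hx
      have hx1 : x ^ (q - 1) = 1 := by
        have h' : x ^ (q-1) * x = 1 * x := by
          rw [one_mul, ← pow_succ, show q-1+1=q by omega, hx]
        exact mul_right_cancel₀ hx0 h'
      rw [pow_mul, hx1, one_pow]
    have hsq : (1 + y) ^ q = 1 + y := by rw [frob1 1 y, one_pow, hyq]
    exact ⟨key y hy0 hyq, key (1+y) hs0 hsq⟩
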